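/- arXiv:2009.13317 — 2 statements merged into one kernel-verified Lean document; each statement's English description precedes it below -/
import Mathlib

section
/- Let D be a finite set of n points in ℝ^d, let O be a set of k centers with k-median cost Σ_{p∈D} d(p,O) = R·n for some R > 0, and let ε ∈ (0,1/2]. Define T = {εR(1+ε)^j : j = 0,1,...,⌈log_{1+ε}(n/ε)⌉}. Then there exists a set S of centers with |S| ≤ k · (1/ε)^{O(d)} · O(log(n/ε)) such that Σ_{p∈D} d(p,S) ≤ 3εRn. -/
open Metric Finset MeasureTheory ENNReal


lemma bic_packing (d : ℕ) (x : EuclideanSpace ℝ (Fin d)) (r ε : ℝ) (hr : 0 < r) (hε : 0 < ε)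
    (hε1 : ε ≤ 1) (s : Finset (EuclideanSpace ℝ (Fin d)))
    (hs : ∀ c ∈ s, dist c x ≤ r)
    (hsep : ∀ c ∈ s, ∀ c' ∈ s, c ≠ c' → ε * r ≤ dist c c') :
    (s.card : ℝ) ≤ (3 / ε) ^ d := by
  let μ : Measure (EuclideanSpace ℝ (Fin d)) := volume
  have hfr : Module.finrank ℝ (EuclideanSpace ℝ (Fin d)) = d := finrank_euclideanSpace_fin
  set δ : ℝ := ε * r / 2 with hδdef
  set ρ : ℝ := r + ε * r / 2 with hρdef
  have δpos : 0 < δ := by positivity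
  have ρpos : 0 < ρ := by positivity
  set A := ⋃ c ∈ s, ball (c : EuclideanSpace ℝ (Fin d)) δ with hA
  have D : Set.Pairwise (s : Set (EuclideanSpace ℝ (Fin d)))
      (Function.onFun Disjoint fun c => ball (c : EuclideanSpace ℝ (Fin d)) δ) := by
    rintro c hc d' hd hcd
    apply ball_disjoint_ball
    calc δ + δ = ε * r := by ring
    _ ≤ dist c d' := hsep c hc d' hd hcd
  have A_subset : A ⊆ ball x ρ := by
    refine Set.iUnion₂_subset fun c hc => ?_
    apply ball_subset_ball'
    calc δ + dist c x ≤ δ + r := add_le_add le_rfl (hs c hc)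
    _ = ρ := by ring
  have I :
    (s.card : ℝ≥0∞) * ENNReal.ofReal (δ ^ d) * μ (ball 0 1) ≤
      ENNReal.ofReal (ρ ^ d) * μ (ball 0 1) := by
    calc
      (s.card : ℝ≥0∞) * ENNReal.ofReal (δ ^ d) * μ (ball 0 1) = μ A := by
        rw [hA, measure_biUnion_finset D fun c _ => measurableSet_ball]
        simp only [μ.addHaar_ball_of_pos _ δpos, hfr]
        simp only [Finset.sum_const, nsmul_eq_mul, mul_assoc]
      _ ≤ μ (ball x ρ) := measure_mono A_subset
      _ = ENNReal.ofReal (ρ ^ d) * μ (ball 0 1) := by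
        simp only [μ.addHaar_ball_of_pos _ ρpos, hfr]
  have J : (s.card : ℝ≥0∞) * ENNReal.ofReal (δ ^ d) ≤ ENNReal.ofReal (ρ ^ d) :=
    (ENNReal.mul_le_mul_iff_left (measure_ball_pos _ _ zero_lt_one).ne' measure_ball_lt_top.ne).1 I
  have K : (s.card : ℝ) * δ ^ d ≤ ρ ^ d := by
    have := ENNReal.toReal_le_of_le_ofReal (pow_nonneg ρpos.le _) J
    rw [ENNReal.toReal_mul, ENNReal.toReal_ofReal (pow_nonneg δpos.le _)] at this
    simpa using this
  have hδρ : ρ ≤ (3 / ε) * δ := by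
    rw [hδdef, hρdef]
    have h1 : (3 / ε) * (ε * r / 2) = 3 * r / 2 := by field_simp
    rw [h1]; nlinarith
  calc (s.card : ℝ) = (s.card : ℝ) * δ ^ d / δ ^ d := by field_simp
  _ ≤ ρ ^ d / δ ^ d := div_le_div_of_nonneg_right K (by positivity)
  _ ≤ ((3 / ε) * δ) ^ d / δ ^ d :=
      div_le_div_of_nonneg_right (pow_le_pow_left₀ ρpos.le hδρ d) (by positivity)
  _ = (3 / ε) ^ d := by rw [mul_pow]; field_simp


lemma bic_exists_net (d : ℕ) (x : EuclideanSpace ℝ (Fin d)) (r ε : ℝ) (hr : 0 < r) (hε : 0 < ε)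
    (hε1 : ε ≤ 1) :
    ∃ N : Finset (EuclideanSpace ℝ (Fin d)), (N.card : ℝ) ≤ (3 / ε) ^ d ∧
      ∀ y, dist y x ≤ r → ∃ z ∈ N, dist y z ≤ ε * r := by
  classical
  have packing : ∀ s : Finset (EuclideanSpace ℝ (Fin d)),
      ((∀ c ∈ s, dist c x ≤ r) ∧ ∀ c ∈ s, ∀ c' ∈ s, c ≠ c' → ε * r ≤ dist c c') →
      (s.card : ℝ) ≤ (3 / ε) ^ d :=
    fun s hs => bic_packing d x r ε hr hε hε1 s hs.1 hs.2
  set P : Finset (EuclideanSpace ℝ (Fin d)) → Prop := fun s =>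
    (∀ c ∈ s, dist c x ≤ r) ∧ ∀ c ∈ s, ∀ c' ∈ s, c ≠ c' → ε * r ≤ dist c c' with hP
  set N₀ : ℕ := ⌈(3 / ε) ^ d⌉₊ with hN₀
  have hcard : ∀ s, P s → s.card ≤ N₀ := by
    intro s hs
    have h1 := packing s hs
    exact_mod_cast h1.trans (Nat.le_ceil _)
  set C : ℕ → Prop := fun n => ∃ s, P s ∧ s.card = n with hC
  have hC1 : C 1 := by
    refine ⟨{x}, ⟨?_, ?_⟩, card_singleton x⟩
    · intro c hc; rw [mem_singleton] at hc; simp [hc, hr.le]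
    · intro c hc c' hc' hne
      rw [mem_singleton] at hc hc'; exact absurd (hc.trans hc'.symm) hne
  have h1N : 1 ≤ N₀ := by
    obtain ⟨s, hs, hc⟩ := hC1
    exact hc ▸ hcard s hs
  set m := Nat.findGreatest C N₀ with hm
  have hmC : C m := Nat.findGreatest_spec h1N hC1
  obtain ⟨s, hPs, hcardm⟩ := hmC
  refine ⟨s, packing s hPs, ?_⟩
  intro y hy
  by_contra hcon
  push_neg at hcon
  have hys : y ∉ s := fun hys => by
    have := hcon y hys; simp at this; nlinarith
  have hPins : P (insert y s) := by
    constructor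
    · intro c hc
      rcases mem_insert.1 hc with h | h
      · rwa [h]
      · exact hPs.1 c h
    · intro c hc c' hc' hne
      rcases mem_insert.1 hc with h | h <;> rcases mem_insert.1 hc' with h' | h'
      · exact absurd (h.trans h'.symm) hne
      · subst h; exact (hcon c' h').le
      · subst h'; rw [dist_comm]; exact (hcon c h).le
      · exact hPs.2 c h c' h' hne
  have : m + 1 ≤ m := by
    have h2 : C (insert y s).card := ⟨insert y s, hPins, rfl⟩
    have := Nat.le_findGreatest (hcard _ hPins) h2
    rwa [card_insert_of_notMem hys, hcardm] at this
  omega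

set_option maxHeartbeats 2000000 in
/-- bi-criteria center set with `k·(1/ε)^{O(d)}·O(log(n/ε))` centers
and cost at most `3εRn`. -/
theorem bicriteria_centers :
    ∃ c : ℝ, 0 < c ∧
      ∀ (d k : ℕ) (D O : Finset (EuclideanSpace ℝ (Fin d))) (R ε : ℝ),
        D.Nonempty → O.Nonempty → O.card = k → 0 < R → 0 < ε → ε ≤ 1 / 2 →
        (∑ p ∈ D, Metric.infDist p (O : Set (EuclideanSpace ℝ (Fin d)))) = R * D.card →
        ∃ S : Finset (EuclideanSpace ℝ (Fin d)),
          (S.card : ℝ) ≤ (k : ℝ) * (1 / ε) ^ (c * d) * (c * Real.log ((D.card : ℝ) / ε)) ∧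
          (∑ p ∈ D, Metric.infDist p (S : Set (EuclideanSpace ℝ (Fin d)))) ≤ 3 * ε * R * D.card := by
  classical
  refine ⟨7, by norm_num, ?_⟩
  intro d k D O R ε hD hO hk hR hε hε2 hcost
  have hn1 : 1 ≤ (D.card : ℝ) := by exact_mod_cast hD.card_pos
  have hn0 : 0 < (D.card : ℝ) := by linarith
  have hε1 : ε ≤ 1 := by linarith
  -- d = 0 : contradiction
  rcases Nat.eq_zero_or_pos d with hd0 | hd
  · exfalso
    subst hd0
    obtain ⟨o, ho⟩ := hO
    have hzero : ∀ p ∈ D, Metric.infDist p (O : Set (EuclideanSpace ℝ (Fin 0))) = 0 := by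
      intro p hp
      have hpo : p = o := Subsingleton.elim _ _
      rw [hpo]
      exact Metric.infDist_zero_of_mem (by exact_mod_cast ho)
    have h0 : (∑ p ∈ D, Metric.infDist p (O : Set (EuclideanSpace ℝ (Fin 0)))) = 0 :=
      Finset.sum_eq_zero hzero
    rw [h0] at hcost
    nlinarith
  -- main case
  have hεR : 0 < ε * R := by positivity
  set n : ℕ := D.card with hn
  set L : ℝ := Real.log ((n : ℝ) / ε) with hL
  have hnε2 : (2 : ℝ) ≤ (n : ℝ) / ε := by
    rw [le_div_iff₀ hε]
    nlinarith
  have hLlog2 : Real.log 2 ≤ L := Real.log_le_log two_pos hnε2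
  have hlog2 : (0.6931471803 : ℝ) < Real.log 2 := Real.log_two_gt_d9
  have hL0 : 0 < L := by linarith
  set J : ℕ := ⌈Real.logb 2 ((n : ℝ) / ε)⌉₊ with hJ
  have h2J : (n : ℝ) / ε ≤ 2 ^ J := by
    have h1 : (n : ℝ) / ε = 2 ^ Real.logb 2 ((n : ℝ) / ε) :=
      (Real.rpow_logb two_pos (by norm_num) (by positivity)).symm
    rw [h1, ← Real.rpow_natCast 2 J]
    exact Real.rpow_le_rpow_of_exponent_le one_le_two (Nat.le_ceil _)
  clear_value n L
  have hJle : (J : ℝ) < L / Real.log 2 + 1 := by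
    have h0 : (0:ℝ) ≤ Real.logb 2 ((n : ℝ) / ε) :=
      Real.logb_nonneg one_lt_two (by linarith)
    rw [hJ, hL]
    have := Nat.ceil_lt_add_one h0
    rwa [Real.logb] at this
  clear_value J
  -- nets
  have net : ∀ (o : EuclideanSpace ℝ (Fin d)) (j : ℕ),
      ∃ N : Finset (EuclideanSpace ℝ (Fin d)), (N.card : ℝ) ≤ (3 / ε) ^ d ∧
        ∀ y, dist y o ≤ 2 ^ j * (ε * R) → ∃ z ∈ N, dist y z ≤ ε * (2 ^ j * (ε * R)) :=
    fun o j => bic_exists_net d o (2 ^ j * (ε * R)) ε (by positivity) hε hε1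
  choose f hf1 hf2 using net
  set S : Finset (EuclideanSpace ℝ (Fin d)) :=
    O ∪ O.biUnion (fun o => (Finset.range (J + 1)).biUnion (fun j => f o j)) with hS
  clear_value S
  refine ⟨S, ?_, ?_⟩
  · -- cardinality bound
    have hM1 : (1 : ℝ) ≤ (3 / ε) ^ d := one_le_pow₀ (by rw [le_div_iff₀ hε]; linarith)
    have hScard : (S.card : ℝ) ≤ (k : ℝ) + (k : ℝ) * (J + 1) * (3 / ε) ^ d := by
      have h1 : S.card ≤ O.card +
          (O.biUnion (fun o => (Finset.range (J + 1)).biUnion (fun j => f o j))).card := by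
        rw [hS]; exact Finset.card_union_le _ _
      have h2 : ((O.biUnion (fun o => (Finset.range (J + 1)).biUnion (fun j => f o j))).card : ℝ)
          ≤ ∑ o ∈ O, (((Finset.range (J + 1)).biUnion (fun j => f o j)).card : ℝ) := by
        exact_mod_cast Finset.card_biUnion_le
      have h3 : ∀ o ∈ O, (((Finset.range (J + 1)).biUnion (fun j => f o j)).card : ℝ)
          ≤ (J + 1) * (3 / ε) ^ d := by
        intro o _
        calc (((Finset.range (J + 1)).biUnion (fun j => f o j)).card : ℝ)
            ≤ ∑ j ∈ Finset.range (J + 1), ((f o j).card : ℝ) := by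
              exact_mod_cast Finset.card_biUnion_le
          _ ≤ ∑ j ∈ Finset.range (J + 1), (3 / ε) ^ d :=
              Finset.sum_le_sum fun j _ => hf1 o j
          _ = (J + 1) * (3 / ε) ^ d := by
              rw [Finset.sum_const, Finset.card_range]; push_cast; ring
      calc (S.card : ℝ) ≤ (O.card : ℝ) +
            ((O.biUnion (fun o => (Finset.range (J + 1)).biUnion (fun j => f o j))).card : ℝ) := by
            exact_mod_cast h1
        _ ≤ (k : ℝ) + ∑ o ∈ O, (((Finset.range (J + 1)).biUnion (fun j => f o j)).card : ℝ) := by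
            rw [hk]; linarith [h2]
        _ ≤ (k : ℝ) + ∑ o ∈ O, ((J : ℝ) + 1) * (3 / ε) ^ d := by
            gcongr with o ho
            exact h3 o ho
        _ = (k : ℝ) + (k : ℝ) * (J + 1) * (3 / ε) ^ d := by
            rw [Finset.sum_const, hk]; push_cast; ring
    -- (3/ε)^d ≤ (1/ε)^(7d)
    have hu : (2 : ℝ) ≤ 1 / ε := by rw [le_div_iff₀ hε]; linarith
    have hM2 : (3 / ε) ^ d ≤ ((1 / ε) ^ 7) ^ d := by
      apply pow_le_pow_left₀ (by positivity)
      have h64 : (64 : ℝ) ≤ (1 / ε) ^ 6 := by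
        calc (64 : ℝ) = 2 ^ 6 := by norm_num
          _ ≤ (1 / ε) ^ 6 := pow_le_pow_left₀ (by norm_num) hu 6
      have : (1 / ε) ^ 7 = (1 / ε) ^ 6 * (1 / ε) := by ring
      rw [this]
      calc 3 / ε = 3 * (1 / ε) := by ring
        _ ≤ 64 * (1 / ε) := by nlinarith
        _ ≤ (1 / ε) ^ 6 * (1 / ε) := by nlinarith
    have hrpow : ((1 / ε) ^ 7) ^ d = (1 / ε) ^ ((7 : ℝ) * d) := by
      rw [← pow_mul, ← Real.rpow_natCast (1 / ε) (7 * d)]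
      push_cast
      ring_nf
    have hlog2pos : (0:ℝ) < Real.log 2 := by linarith
    have hJ7 : (J : ℝ) + 2 ≤ 7 * L := by
      have h2' : (J:ℝ) - 1 < L / Real.log 2 := by linarith
      have h3 : L / Real.log 2 ≤ L / 0.6931471803 :=
        div_le_div_of_nonneg_left hL0.le (by norm_num) hlog2.le
      have h4 : L / 0.6931471803 ≤ 1.45 * L := by
        rw [div_le_iff₀ (by norm_num)]
        nlinarith
      have h5 : (3:ℝ) ≤ 4.4 * L := by nlinarith
      linarith
    have hk0 : (0 : ℝ) ≤ (k : ℝ) := Nat.cast_nonneg k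
    have hpow0 : (0 : ℝ) ≤ (1 / ε) ^ ((7 : ℝ) * d) := by positivity
    have hkM : (k:ℝ) ≤ (k:ℝ) * (3 / ε) ^ d := le_mul_of_one_le_right hk0 hM1
    have hring : (k:ℝ) * ((J:ℝ) + 2) * (3 / ε) ^ d
        = (k:ℝ) * ((J:ℝ) + 1) * (3 / ε) ^ d + (k:ℝ) * (3 / ε) ^ d := by ring
    have hstep : (k:ℝ) * ((J:ℝ) + 2) * ((3 / ε) ^ d)
        ≤ (k:ℝ) * (7 * L) * (((1 / ε) ^ 7) ^ d) := by
      apply mul_le_mul (mul_le_mul_of_nonneg_left hJ7 hk0) hM2 (by positivity)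
      positivity
    calc (S.card : ℝ) ≤ (k : ℝ) + (k : ℝ) * (J + 1) * (3 / ε) ^ d := hScard
      _ ≤ (k : ℝ) * ((J : ℝ) + 2) * (3 / ε) ^ d := by linarith
      _ ≤ (k : ℝ) * (7 * L) * (((1 / ε) ^ 7) ^ d) := hstep
      _ = (k : ℝ) * (1 / ε) ^ ((7 : ℝ) * d) * (7 * L) := by rw [hrpow]; ring
  · -- cost bound
    have key : ∀ p ∈ D, Metric.infDist p (S : Set (EuclideanSpace ℝ (Fin d)))
        ≤ ε * R + 2 * ε * Metric.infDist p (O : Set (EuclideanSpace ℝ (Fin d))) := by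
      intro p hp
      obtain ⟨o, ho, hdo⟩ := (O.finite_toSet.isCompact).exists_infDist_eq_dist
        (by exact_mod_cast hO) p
      have hoO : o ∈ O := by exact_mod_cast ho
      have hdpnn : (0 : ℝ) ≤ dist p o := dist_nonneg
      by_cases hcase : dist p o ≤ ε * R
      · have hoS : o ∈ S := by rw [hS]; exact Finset.mem_union_left _ hoO
        have h1 : Metric.infDist p (S : Set (EuclideanSpace ℝ (Fin d))) ≤ dist p o :=
          Metric.infDist_le_dist_of_mem (by exact_mod_cast hoS)
        have h2 : 0 ≤ Metric.infDist p (O : Set (EuclideanSpace ℝ (Fin d))) :=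
          Metric.infDist_nonneg
        nlinarith
      · push_neg at hcase
        have hdRn : dist p o ≤ R * n := by
          rw [← hdo, ← hcost]
          exact Finset.single_le_sum
            (f := fun q => Metric.infDist q (O : Set (EuclideanSpace ℝ (Fin d))))
            (fun q _ => Metric.infDist_nonneg) hp
        have hex : ∃ j : ℕ, dist p o ≤ 2 ^ j * (ε * R) := by
          refine ⟨J, hdRn.trans ?_⟩
          calc R * n = ((n : ℝ) / ε) * (ε * R) := by field_simp
            _ ≤ 2 ^ J * (ε * R) := by nlinarith
        set j : ℕ := Nat.find hex with hj
        have hj1 : dist p o ≤ 2 ^ j * (ε * R) := Nat.find_spec hex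
        have hjJ : j ≤ J := Nat.find_min' hex (by
          refine hdRn.trans ?_
          calc R * n = ((n : ℝ) / ε) * (ε * R) := by field_simp
            _ ≤ 2 ^ J * (ε * R) := by nlinarith)
        have hj0 : j ≠ 0 := by
          intro h0
          rw [h0] at hj1
          norm_num at hj1
          linarith
        have hjpred : ¬ dist p o ≤ 2 ^ (j - 1) * (ε * R) := Nat.find_min hex (by omega)
        push_neg at hjpred
        have h2j : (2 : ℝ) ^ j = 2 * 2 ^ (j - 1) := by
          rw [← pow_succ']
          congr 1
          omega
        obtain ⟨z, hz, hdz⟩ := hf2 o j p hj1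
        have hzS : z ∈ S := by
          rw [hS]
          apply Finset.mem_union_right
          apply Finset.mem_biUnion.2
          exact ⟨o, hoO, Finset.mem_biUnion.2 ⟨j, Finset.mem_range.2 (by omega), hz⟩⟩
        have h1 : Metric.infDist p (S : Set (EuclideanSpace ℝ (Fin d))) ≤ dist p z :=
          Metric.infDist_le_dist_of_mem (by exact_mod_cast hzS)
        have h2 : ε * (2 ^ j * (ε * R)) ≤ 2 * ε * dist p o := by
          have hm := mul_le_mul_of_nonneg_left hjpred.le hε.le
          rw [h2j]
          nlinarith [hm]
        rw [hdo]
        linarith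
    calc (∑ p ∈ D, Metric.infDist p (S : Set (EuclideanSpace ℝ (Fin d))))
        ≤ ∑ p ∈ D, (ε * R + 2 * ε * Metric.infDist p (O : Set (EuclideanSpace ℝ (Fin d)))) :=
          Finset.sum_le_sum key
      _ = (n : ℝ) * (ε * R) + 2 * ε * (R * n) := by
          rw [Finset.sum_add_distrib, Finset.sum_const, ← Finset.mul_sum, hcost, ← hn]
          push_cast
          ring
      _ = 3 * ε * R * n := by ring
end

section
/- Let D be a finite set of n points in ℝ^d, ε ∈ (0,1/2], and let OPT_k denote the optimal k-median cost of D. Then for k' = k·(1/ε)^{c·d}·⌈log(n/ε)/log(1+ε)⌉ (for a suitable absolute constant c), the optimal k'-median cost satisfies OPT_{k'} ≤ 3ε·OPT_k. -/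
open Metric

/-- k-median clustering cost of a finite point set w.r.t. a center set. -/
noncomputable def kmedCost (d : ℕ) (D : Finset (EuclideanSpace ℝ (Fin d)))
    (C : Set (EuclideanSpace ℝ (Fin d))) : ℝ :=
  ∑ p ∈ D, Metric.infDist p C

/-- optimal m-median cost with at most `m` centers. -/
noncomputable def kmedOPT (d : ℕ) (m : ℕ) (D : Finset (EuclideanSpace ℝ (Fin d))) : ℝ :=
  sInf {x : ℝ | ∃ C : Finset (EuclideanSpace ℝ (Fin d)),
    C.Nonempty ∧ C.card ≤ m ∧ kmedCost d D (C : Set (EuclideanSpace ℝ (Fin d))) = x}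

open MeasureTheory ENNReal

lemma exists_greedy_net {E : Type*} [MetricSpace E] {ρ : ℝ} (hρ : 0 < ρ) (P : Finset E) :
    ∃ F : Finset E, F ⊆ P ∧ (∀ p ∈ P, ∃ f ∈ F, dist p f < ρ) ∧
      (∀ f ∈ F, ∀ g ∈ F, f ≠ g → ρ ≤ dist f g) := by
  classical
  induction P using Finset.strongInduction with
  | _ P ih =>
    rcases P.eq_empty_or_nonempty with rfl | ⟨p₀, hp₀⟩
    · exact ⟨∅, by simp⟩
    · set P' := P.filter (fun q => ρ ≤ dist q p₀) with hP'
      have hsub : P' ⊆ P := Finset.filter_subset _ _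
      have hp₀' : p₀ ∉ P' := by
        simp only [hP', Finset.mem_filter, dist_self, not_and]
        intro _; linarith
      have hss : P' ⊂ P := Finset.ssubset_iff_of_subset hsub |>.2 ⟨p₀, hp₀, hp₀'⟩
      obtain ⟨F', hF'sub, hcov, hsep⟩ := ih P' hss
      refine ⟨insert p₀ F', Finset.insert_subset hp₀ (hF'sub.trans hsub), ?_, ?_⟩
      · intro p hp
        by_cases h : ρ ≤ dist p p₀
        · obtain ⟨f, hf, hd⟩ := hcov p (Finset.mem_filter.2 ⟨hp, h⟩)
          exact ⟨f, Finset.mem_insert_of_mem hf, hd⟩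
        · exact ⟨p₀, Finset.mem_insert_self _ _, by linarith⟩
      · intro f hf g hg hfg
        rcases Finset.mem_insert.1 hf with hf' | hf' <;>
          rcases Finset.mem_insert.1 hg with hg' | hg'
        · exact absurd (hf'.trans hg'.symm) hfg
        · subst hf'; rw [dist_comm]; exact (Finset.mem_filter.1 (hF'sub hg')).2
        · subst hg'; exact (Finset.mem_filter.1 (hF'sub hf')).2
        · exact hsep f hf' g hg' hfg

lemma card_le_of_separated {d : ℕ} (F : Finset (EuclideanSpace ℝ (Fin d)))
    (c : EuclideanSpace ℝ (Fin d)) {T ρ : ℝ} (hρ : 0 < ρ) (hT : 0 ≤ T)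
    (hF : ∀ f ∈ F, dist f c ≤ T)
    (hsep : ∀ f ∈ F, ∀ g ∈ F, f ≠ g → ρ ≤ dist f g) :
    (F.card : ℝ) * (ρ / 2) ^ d ≤ (T + ρ / 2) ^ d := by
  have hρ2 : (0:ℝ) < ρ / 2 := by linarith
  set μ : Measure (EuclideanSpace ℝ (Fin d)) := volume with hμ
  have hdisj : Set.PairwiseDisjoint (↑F)
      (fun f : EuclideanSpace ℝ (Fin d) => ball f (ρ / 2)) := by
    intro f hf g hg hfg
    apply ball_disjoint_ball
    calc ρ / 2 + ρ / 2 = ρ := by ring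
    _ ≤ dist f g := hsep f hf g hg hfg
  have hsum : μ (⋃ f ∈ F, ball f (ρ / 2)) = ∑ f ∈ F, μ (ball f (ρ / 2)) :=
    measure_biUnion_finset hdisj (fun f _ => measurableSet_ball)
  have hsub : (⋃ f ∈ F, ball f (ρ / 2)) ⊆ ball c (T + ρ / 2) := by
    intro x hx
    simp only [Set.mem_iUnion] at hx
    obtain ⟨f, hf, hx⟩ := hx
    have h1 := hF f hf
    have h2 := mem_ball.1 hx
    have : dist x c ≤ dist x f + dist f c := dist_triangle _ _ _
    exact mem_ball.2 (by linarith)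
  have hball : ∀ (x : EuclideanSpace ℝ (Fin d)) (r : ℝ), 0 < r →
      μ (ball x r) = ENNReal.ofReal (r ^ d) * μ (ball (0 : EuclideanSpace ℝ (Fin d)) 1) := by
    intro x r hr
    rw [Measure.addHaar_ball_of_pos μ x hr, finrank_euclideanSpace_fin]
  have hμpos : μ (ball (0 : EuclideanSpace ℝ (Fin d)) 1) ≠ 0 :=
    (measure_ball_pos μ _ one_pos).ne'
  have hμtop : μ (ball (0 : EuclideanSpace ℝ (Fin d)) 1) ≠ ⊤ := measure_ball_lt_top.ne
  have h1 : (F.card : ℝ≥0∞) * ENNReal.ofReal ((ρ/2) ^ d)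
        * μ (ball (0 : EuclideanSpace ℝ (Fin d)) 1)
      ≤ ENNReal.ofReal ((T + ρ/2) ^ d) * μ (ball (0 : EuclideanSpace ℝ (Fin d)) 1) := by
    calc (F.card : ℝ≥0∞) * ENNReal.ofReal ((ρ/2) ^ d)
          * μ (ball (0 : EuclideanSpace ℝ (Fin d)) 1)
        = ∑ _f ∈ F, ENNReal.ofReal ((ρ/2) ^ d)
            * μ (ball (0 : EuclideanSpace ℝ (Fin d)) 1) := by
          rw [Finset.sum_const, nsmul_eq_mul, mul_assoc]
    _ = ∑ f ∈ F, μ (ball f (ρ/2)) :=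
          Finset.sum_congr rfl (fun f _ => (hball f _ hρ2).symm)
    _ = μ (⋃ f ∈ F, ball f (ρ / 2)) := hsum.symm
    _ ≤ μ (ball c (T + ρ / 2)) := measure_mono hsub
    _ = ENNReal.ofReal ((T + ρ/2) ^ d) * μ (ball (0 : EuclideanSpace ℝ (Fin d)) 1) :=
          hball c _ (by linarith)
  have key : (F.card : ℝ≥0∞) * ENNReal.ofReal ((ρ/2) ^ d) ≤ ENNReal.ofReal ((T + ρ/2) ^ d) :=
    (ENNReal.mul_le_mul_iff_left hμpos hμtop).1 h1
  have := ENNReal.toReal_mono (by simp) key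
  rw [ENNReal.toReal_mul, ENNReal.toReal_ofReal (by positivity),
    ENNReal.toReal_ofReal (by positivity)] at this
  simpa using this

lemma kmedCost_nonneg (d : ℕ) (D : Finset (EuclideanSpace ℝ (Fin d)))
    (C : Set (EuclideanSpace ℝ (Fin d))) : 0 ≤ kmedCost d D C :=
  Finset.sum_nonneg fun _ _ => infDist_nonneg

lemma kmedSet_bddBelow (d m : ℕ) (D : Finset (EuclideanSpace ℝ (Fin d))) :
    BddBelow {x : ℝ | ∃ C : Finset (EuclideanSpace ℝ (Fin d)),
      C.Nonempty ∧ C.card ≤ m ∧ kmedCost d D (C : Set (EuclideanSpace ℝ (Fin d))) = x} := by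
  refine ⟨0, fun x hx => ?_⟩
  obtain ⟨C, _, _, hC⟩ := hx
  exact hC ▸ kmedCost_nonneg d D _

lemma kmedSet_nonempty (d m : ℕ) (hm : 1 ≤ m) (D : Finset (EuclideanSpace ℝ (Fin d)))
    (hD : D.Nonempty) :
    Set.Nonempty {x : ℝ | ∃ C : Finset (EuclideanSpace ℝ (Fin d)),
      C.Nonempty ∧ C.card ≤ m ∧ kmedCost d D (C : Set (EuclideanSpace ℝ (Fin d))) = x} := by
  obtain ⟨p, hp⟩ := hD
  exact ⟨_, ⟨{p}, Finset.singleton_nonempty p, by simpa using hm, rfl⟩⟩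

set_option maxHeartbeats 1000000 in
lemma main_claim {d k : ℕ} (D : Finset (EuclideanSpace ℝ (Fin d))) {ε : ℝ}
    (hD : D.Nonempty) (hk : 1 ≤ k) (hε : 0 < ε) (hε2 : ε ≤ 1/2) (k' : ℕ)
    (hk' : k * ⌈(1/ε) ^ ((2:ℝ) * (d:ℝ))⌉₊ *
      ⌈Real.log ((D.card:ℝ)/ε) / Real.log (1+ε)⌉₊ ≤ k')
    (C : Finset (EuclideanSpace ℝ (Fin d))) (hCne : C.Nonempty) (hCk : C.card ≤ k) :
    kmedOPT d k' D ≤ 3 * ε * kmedCost d D (C : Set (EuclideanSpace ℝ (Fin d))) := by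
  classical
  set n := D.card with hn
  have hn0 : 0 < n := Finset.card_pos.2 hD
  have hn0' : (0:ℝ) < (n:ℝ) := by exact_mod_cast hn0
  have hn1' : (1:ℝ) ≤ (n:ℝ) := by exact_mod_cast hn0
  set W := kmedCost d D (C : Set (EuclideanSpace ℝ (Fin d))) with hWdef
  have hW0 : 0 ≤ W := kmedCost_nonneg d D _
  set N := ⌈(1/ε) ^ ((2:ℝ) * (d:ℝ))⌉₊ with hNdef
  set M := ⌈Real.log ((n:ℝ)/ε) / Real.log (1+ε)⌉₊ with hMdef
  have h1ε : (0:ℝ) < 1 + ε := by linarith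
  have hL : 0 < Real.log (1+ε) := Real.log_pos (by linarith)
  have hinv : (2:ℝ) ≤ 1/ε := by rw [le_div_iff₀ hε]; linarith
  have hnε2 : (2:ℝ) ≤ (n:ℝ)/ε := by
    calc (2:ℝ) ≤ 1/ε := hinv
    _ ≤ (n:ℝ)/ε := by gcongr
  have hM1 : 1 ≤ M := Nat.one_le_ceil_iff.2 (div_pos (Real.log_pos (by linarith)) hL)
  have hN1 : 1 ≤ N := Nat.one_le_ceil_iff.2 (Real.rpow_pos_of_pos (by positivity) _)
  have hNR : ((2/ε)^d : ℝ) ≤ (N:ℝ) := by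
    have e1 : ((1:ℝ)/ε) ^ ((2:ℝ)*(d:ℝ)) = ((1/ε)^2)^d := by
      rw [show (2:ℝ)*(d:ℝ) = ((2*d : ℕ):ℝ) by push_cast; ring, Real.rpow_natCast, pow_mul]
    have e2 : (2:ℝ)/ε ≤ (1/ε)^2 := by
      rw [div_pow, one_pow, div_le_div_iff₀ hε (by positivity)]
      nlinarith
    calc ((2/ε)^d : ℝ) ≤ ((1/ε)^2)^d := pow_le_pow_left₀ (by positivity) e2 d
    _ = (1/ε) ^ ((2:ℝ)*(d:ℝ)) := e1.symm
    _ ≤ (N:ℝ) := Nat.le_ceil _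
  rcases eq_or_lt_of_le hW0 with hWz | hWpos
  · -- case W = 0
    have hkk' : k ≤ k' := by
      calc k = k * 1 * 1 := by ring
      _ ≤ k * N * M := by exact Nat.mul_le_mul (Nat.mul_le_mul_left k hN1) hM1
      _ ≤ k' := hk'
    have h1 : kmedOPT d k' D ≤ W :=
      csInf_le (kmedSet_bddBelow d k' D) ⟨C, hCne, hCk.trans hkk', rfl⟩
    nlinarith
  · -- case 0 < W
    set b := ε * W / n with hbdef
    have hb0 : 0 < b := by positivity
    have hCcoe : ((C : Set (EuclideanSpace ℝ (Fin d)))).Nonempty := by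
      exact_mod_cast hCne
    have hcomp : IsCompact (C : Set (EuclideanSpace ℝ (Fin d))) := C.finite_toSet.isCompact
    choose cp hcpC hcpd using fun p => hcomp.exists_infDist_eq_dist hCcoe p
    set r : EuclideanSpace ℝ (Fin d) → ℝ :=
      fun p => infDist p (C : Set (EuclideanSpace ℝ (Fin d))) with hrdef
    have hr0 : ∀ p, 0 ≤ r p := fun p => infDist_nonneg
    have hWsum : W = ∑ p ∈ D, r p := rfl
    have hrW : ∀ p ∈ D, r p ≤ W := by
      intro p hp
      rw [hWsum]
      exact Finset.single_le_sum (fun q _ => hr0 q) hp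
    set L := Real.log (1+ε) with hLdef
    have hexp : ∀ j : ℕ, ((1+ε:ℝ))^j = Real.exp (j*L) := by
      intro j
      calc ((1+ε:ℝ))^j = (Real.exp L)^j := by rw [Real.exp_log h1ε]
      _ = Real.exp (j*L) := (Real.exp_nat_mul L j).symm
    set sc : EuclideanSpace ℝ (Fin d) → ℕ :=
      fun p => if r p ≤ b then 0 else min ⌊Real.log (r p / b) / L⌋₊ (M-1) with hscdef
    have hscM : ∀ p, sc p < M := by
      intro p
      rw [hscdef]
      by_cases h : r p ≤ b
      · simp only [if_pos h]; omega
      · simp only [if_neg h]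
        have := min_le_right ⌊Real.log (r p / b) / L⌋₊ (M-1)
        omega
    -- upper bound : r p ≤ b * (1+ε)^(sc p + 1)
    have hupper : ∀ p ∈ D, r p ≤ b * (1+ε)^(sc p + 1) := by
      intro p hp
      by_cases h : r p ≤ b
      · rw [hscdef]
        simp only [if_pos h, pow_one, zero_add]
        nlinarith
      · push_neg at h
        have hrb0 : 0 < r p / b := div_pos (hb0.trans h) hb0
        have hrb1 : (1:ℝ) < r p / b := (one_lt_div hb0).2 h
        have hx0 : 0 ≤ Real.log (r p / b) / L := by
          have := Real.log_nonneg hrb1.le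
          positivity
        rw [hscdef]
        simp only [if_neg (not_le.2 h)]
        rcases le_total ⌊Real.log (r p / b) / L⌋₊ (M-1) with hc | hc
        · rw [min_eq_left hc]
          set j := ⌊Real.log (r p / b) / L⌋₊ with hj
          have h1 : Real.log (r p / b) / L < j + 1 := Nat.lt_floor_add_one _
          have h2 : Real.log (r p / b) < (j+1) * L := by
            rw [div_lt_iff₀ hL] at h1
            linarith [h1]
          have h3 : r p / b < Real.exp ((j+1)*L) := by
            calc r p / b = Real.exp (Real.log (r p / b)) := (Real.exp_log hrb0).symm
            _ < Real.exp ((j+1)*L) := Real.exp_lt_exp.2 h2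
          rw [hexp (j+1)] at *
          push_cast at h3 ⊢
          rw [div_lt_iff₀ hb0] at h3
          linarith
        · rw [min_eq_right hc]
          have hM' : (M - 1) + 1 = M := by omega
          rw [hM']
          have h1 : Real.log ((n:ℝ)/ε) ≤ M * L := by
            have := Nat.le_ceil (Real.log ((n:ℝ)/ε) / Real.log (1+ε))
            rw [← hLdef, ← hMdef] at this
            rw [← div_le_iff₀ hL]
            exact this
          have h2 : (n:ℝ)/ε ≤ Real.exp (M*L) := by
            calc (n:ℝ)/ε = Real.exp (Real.log ((n:ℝ)/ε)) :=
                  (Real.exp_log (by positivity)).symm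
            _ ≤ Real.exp (M*L) := Real.exp_le_exp.2 h1
          have h3 : W = b * ((n:ℝ)/ε) := by
            rw [hbdef]; field_simp
          calc r p ≤ W := hrW p hp
          _ = b * ((n:ℝ)/ε) := h3
          _ ≤ b * Real.exp (M*L) := mul_le_mul_of_nonneg_left h2 hb0.le
          _ = b * (1+ε)^M := by rw [hexp M]
    -- lower-type bound
    have hlower : ∀ p, 2*ε*(b*(1+ε)^(sc p)) ≤ b + 2*ε*(r p) := by
      intro p
      by_cases h : r p ≤ b
      · rw [hscdef]
        simp only [if_pos h, pow_zero, mul_one]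
        nlinarith [hr0 p]
      · push_neg at h
        have hrb0 : 0 < r p / b := div_pos (hb0.trans h) hb0
        have hrb1 : (1:ℝ) < r p / b := (one_lt_div hb0).2 h
        have key : b * (1+ε)^(sc p) ≤ r p := by
          rw [hscdef]
          simp only [if_neg (not_le.2 h)]
          set x := Real.log (r p / b) / L with hx
          have hx0 : 0 ≤ x := by
            have := Real.log_nonneg hrb1.le
            positivity
          have h1 : ((min ⌊x⌋₊ (M-1) : ℕ) : ℝ) ≤ x := by
            calc ((min ⌊x⌋₊ (M-1) : ℕ) : ℝ) ≤ (⌊x⌋₊ : ℝ) := by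
                  exact_mod_cast min_le_left _ _
            _ ≤ x := Nat.floor_le hx0
          have h2 : ((min ⌊x⌋₊ (M-1) : ℕ) : ℝ) * L ≤ Real.log (r p / b) := by
            rw [hx] at h1
            calc ((min ⌊x⌋₊ (M-1) : ℕ) : ℝ) * L ≤ Real.log (r p / b) / L * L := by
                  exact mul_le_mul_of_nonneg_right h1 hL.le
            _ = Real.log (r p / b) := by field_simp
          have h3 : Real.exp (((min ⌊x⌋₊ (M-1) : ℕ) : ℝ) * L) ≤ r p / b := by
            calc Real.exp _ ≤ Real.exp (Real.log (r p / b)) := Real.exp_le_exp.2 h2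
            _ = r p / b := Real.exp_log hrb0
          rw [hexp]
          rw [mul_comm b]
          rw [← le_div_iff₀ hb0]
          exact h3
        nlinarith [hb0]
    -- per-class nets
    have hρpos : ∀ j : ℕ, (0:ℝ) < 2*ε*b*(1+ε)^j := by intro j; positivity
    choose F hFsub hFcov hFsep using fun (c : EuclideanSpace ℝ (Fin d)) (j : ℕ) =>
      exists_greedy_net (hρpos j) (D.filter (fun p => cp p = c ∧ sc p = j))
    -- per-class cardinality bound
    have hFcard : ∀ c j, (F c j).card ≤ N := by
      intro c j
      have hball : ∀ f ∈ F c j, dist f c ≤ b*(1+ε)^(j+1) := by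
        intro f hf
        have hmem := hFsub c j hf
        rw [Finset.mem_filter] at hmem
        obtain ⟨hfD, hfc, hfs⟩ := hmem
        calc dist f c = dist f (cp f) := by rw [hfc]
        _ = r f := by rw [hrdef]; exact (hcpd f).symm
        _ ≤ b*(1+ε)^(sc f + 1) := hupper f hfD
        _ = b*(1+ε)^(j+1) := by rw [hfs]
      have hkey := card_le_of_separated (F c j) c (hρpos j) (by positivity) hball (hFsep c j)
      have hhalf : (2*ε*b*(1+ε)^j) / 2 = ε*b*(1+ε)^j := by ring
      rw [hhalf] at hkey
      have hrw : b*(1+ε)^(j+1) + ε*b*(1+ε)^j = (1+2*ε) * (b*(1+ε)^j) := by ring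
      rw [hrw] at hkey
      have hs0 : (0:ℝ) < ε*b*(1+ε)^j := by positivity
      have hB : ((1+2*ε) * (b*(1+ε)^j))^d ≤ (2/ε)^d * (ε*b*(1+ε)^j)^d := by
        rw [← mul_pow]
        apply pow_le_pow_left₀ (by positivity)
        have : (2/ε) * (ε*b*(1+ε)^j) = 2 * (b*(1+ε)^j) := by field_simp
        rw [this]
        nlinarith [hs0, hb0, pow_pos h1ε j]
      have hcd : ((F c j).card : ℝ) ≤ (2/ε)^d := by
        have h1 : ((F c j).card : ℝ) * (ε*b*(1+ε)^j)^d ≤ (2/ε)^d * (ε*b*(1+ε)^j)^d :=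
          le_trans hkey hB
        exact le_of_mul_le_mul_right h1 (by positivity)
      exact_mod_cast hcd.trans hNR
    -- assemble the new center set
    set C' := (C ×ˢ Finset.range M).biUnion (fun cj => F cj.1 cj.2) with hC'def
    have hC'card : C'.card ≤ k' := by
      calc C'.card ≤ ∑ cj ∈ C ×ˢ Finset.range M, (F cj.1 cj.2).card :=
            Finset.card_biUnion_le
      _ ≤ ∑ _cj ∈ C ×ˢ Finset.range M, N := Finset.sum_le_sum (fun cj _ => hFcard cj.1 cj.2)
      _ = C.card * M * N := by
            rw [Finset.sum_const, smul_eq_mul, Finset.card_product, Finset.card_range]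
      _ ≤ k * M * N := by
            exact Nat.mul_le_mul_right N (Nat.mul_le_mul_right M hCk)
      _ = k * N * M := by ring
      _ ≤ k' := hk'
    -- coverage of every data point
    have hcov : ∀ p ∈ D, ∃ f ∈ C', dist p f ≤ b + 2*ε*(r p) := by
      intro p hp
      have hpclass : p ∈ D.filter (fun q => cp q = cp p ∧ sc q = sc p) :=
        Finset.mem_filter.2 ⟨hp, rfl, rfl⟩
      obtain ⟨f, hf, hdf⟩ := hFcov (cp p) (sc p) p hpclass
      refine ⟨f, ?_, ?_⟩
      · rw [hC'def]
        refine Finset.mem_biUnion.2 ⟨(cp p, sc p), ?_, hf⟩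
        exact Finset.mem_product.2 ⟨hcpC p, Finset.mem_range.2 (hscM p)⟩
      · calc dist p f ≤ 2*ε*b*(1+ε)^(sc p) := hdf.le
        _ = 2*ε*(b*(1+ε)^(sc p)) := by ring
        _ ≤ b + 2*ε*(r p) := hlower p
    have hC'ne : C'.Nonempty := by
      obtain ⟨p, hp⟩ := hD
      obtain ⟨f, hf, _⟩ := hcov p hp
      exact ⟨f, hf⟩
    have hcost : kmedCost d D (C' : Set (EuclideanSpace ℝ (Fin d))) ≤ 3*ε*W := by
      have hterm : ∀ p ∈ D, infDist p (C' : Set (EuclideanSpace ℝ (Fin d)))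
          ≤ b + 2*ε*(r p) := by
        intro p hp
        obtain ⟨f, hf, hdf⟩ := hcov p hp
        exact le_trans (infDist_le_dist_of_mem (Finset.mem_coe.2 hf)) hdf
      calc kmedCost d D (C' : Set (EuclideanSpace ℝ (Fin d)))
          ≤ ∑ p ∈ D, (b + 2*ε*(r p)) := Finset.sum_le_sum hterm
      _ = (D.card : ℝ) * b + ∑ p ∈ D, 2*ε*(r p) := by
            rw [Finset.sum_add_distrib, Finset.sum_const, nsmul_eq_mul]
      _ = ε*W + 2*ε*W := by
            have e1 : ((D.card : ℕ) : ℝ) * b = ε*W := by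
              rw [hbdef, ← hn, mul_comm, div_mul_cancel₀ _ (ne_of_gt hn0')]
            have e2 : ∑ p ∈ D, 2*ε*(r p) = 2*ε*W := by
              rw [← Finset.mul_sum, ← hWsum]
            rw [e1, e2]
      _ = 3*ε*W := by ring
    calc kmedOPT d k' D ≤ kmedCost d D (C' : Set (EuclideanSpace ℝ (Fin d))) :=
          csInf_le (kmedSet_bddBelow d k' D) ⟨C', hC'ne, hC'card, rfl⟩
    _ ≤ 3*ε*W := hcost

/-- for `k' = k·(1/ε)^{c·d}·⌈log(n/ε)/log(1+ε)⌉`, with a suitable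
absolute constant `c`, we have `OPT_{k'} ≤ 3ε·OPT_k`. -/
theorem OPT_kprime_le :
    ∃ c : ℝ, 0 < c ∧
      ∀ (d k : ℕ) (D : Finset (EuclideanSpace ℝ (Fin d))) (ε : ℝ),
        D.Nonempty → 1 ≤ k → 0 < ε → ε ≤ 1 / 2 →
        ∀ k' : ℕ,
          k * ⌈(1 / ε) ^ (c * (d : ℝ))⌉₊ *
            ⌈Real.log ((D.card : ℝ) / ε) / Real.log (1 + ε)⌉₊ ≤ k' →
          kmedOPT d k' D ≤ 3 * ε * kmedOPT d k D := by
  refine ⟨2, two_pos, ?_⟩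
  intro d k D ε hD hk hε hε2 k' hk'
  have h3ε : (0:ℝ) < 3 * ε := by linarith
  have hdiv : ∀ x ∈ {x : ℝ | ∃ C : Finset (EuclideanSpace ℝ (Fin d)),
      C.Nonempty ∧ C.card ≤ k ∧ kmedCost d D (C : Set (EuclideanSpace ℝ (Fin d))) = x},
      kmedOPT d k' D / (3 * ε) ≤ x := by
    rintro x ⟨C, hCne, hCk, rfl⟩
    rw [div_le_iff₀ h3ε]
    calc kmedOPT d k' D ≤ 3 * ε * kmedCost d D (C : Set (EuclideanSpace ℝ (Fin d))) :=
          main_claim D hD hk hε hε2 k' hk' C hCne hCk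
    _ = _ := by ring
  have := le_csInf (kmedSet_nonempty d k hk D hD) hdiv
  rw [div_le_iff₀ h3ε] at this
  calc kmedOPT d k' D ≤ kmedOPT d k D * (3 * ε) := this
  _ = 3 * ε * kmedOPT d k D := by ring
end
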